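/- Let K ⊂ ℝ^N be a convex body symmetric with respect to the origin (K = −K) and let G ⊂ ℝ^N be a bounded measurable set with positive Lebesgue measure which is uniformly K-dense and centrally symmetric (there exists z ∈ ℝ^N with 2z − Ḡ = Ḡ). Then G equals K up to a homothety: there exist λ > 0 and x₀ ∈ ℝ^N such that Ḡ = x₀ + λK. -/

import Mathlib

open MeasureTheory Set Pointwise
open scoped ENNReal

set_option maxHeartbeats 1000000

/-- **Corollary 2.8.** Let `K ⊂ ℝ^N` be a convex body symmetric with respect to the origin
(hence containing the origin in its interior) and `G ⊂ ℝ^N` a bounded measurable set of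
positive Lebesgue measure which is uniformly `K`-dense and centrally symmetric.  Then `G`
equals `K` up to a homothety: `Ḡ = x₀ + λ K` for some `λ > 0` and `x₀ ∈ ℝ^N`. -/
theorem K_dense_centrally_symmetric_homothetic
    (N : ℕ) (K G : Set (EuclideanSpace ℝ (Fin N)))
    (hK_conv : Convex ℝ K) (hK_comp : IsCompact K)
    (hK0 : (0 : EuclideanSpace ℝ (Fin N)) ∈ interior K)
    (hK_symm : K = -K)
    (hG_meas : MeasurableSet G) (hG_bdd : Bornology.IsBounded G)
    (hG_pos : 0 < volume G)
    (hG_symm : ∃ z : EuclideanSpace ℝ (Fin N),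
      (fun y => (2 : ℝ) • z - y) '' closure G = closure G)
    (hdense : ∀ r : ℝ, 0 < r → ∀ x ∈ frontier G, ∀ y ∈ frontier G,
      volume (G ∩ (x +ᵥ r • K)) = volume (G ∩ (y +ᵥ r • K))) :
    ∃ lam : ℝ, 0 < lam ∧ ∃ x₀ : EuclideanSpace ℝ (Fin N),
      closure G = x₀ +ᵥ lam • K := by
  classical
  obtain ⟨z, hz⟩ := hG_symm
  -- Trivial case `N = 0`.
  rcases Nat.eq_zero_or_pos N with hN | hN
  · subst hN
    haveI : Subsingleton (EuclideanSpace ℝ (Fin 0)) :=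
      ⟨fun a b => PiLp.ext fun i => i.elim0⟩
    obtain ⟨g, hg⟩ : G.Nonempty := nonempty_of_measure_ne_zero hG_pos.ne'
    have hK0m : (0 : EuclideanSpace ℝ (Fin 0)) ∈ K := interior_subset hK0
    refine ⟨1, one_pos, 0, ?_⟩
    have h1 : closure G = Set.univ :=
      Set.eq_univ_of_forall fun x => Subsingleton.elim g x ▸ subset_closure hg
    have h2 : (0 : EuclideanSpace ℝ (Fin 0)) +ᵥ (1 : ℝ) • K = Set.univ := by
      refine Set.eq_univ_of_forall fun x => ?_
      have : x ∈ (1 : ℝ) • K := by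
        have := Subsingleton.elim ((1 : ℝ) • (0 : EuclideanSpace ℝ (Fin 0))) x
        exact this ▸ smul_mem_smul_set hK0m
      simpa using this
    rw [h1, h2]
  haveI : Nonempty (Fin N) := ⟨⟨0, hN⟩⟩
  -- Basic facts about `K`.
  have hKcl : IsClosed K := hK_comp.isClosed
  have hKnhds : K ∈ nhds (0 : EuclideanSpace ℝ (Fin N)) := mem_interior_iff_mem_nhds.1 hK0
  have habs : Absorbent ℝ K := absorbent_nhds_zero hKnhds
  have hgauge_le : ∀ {r : ℝ}, 0 < r → ∀ v : EuclideanSpace ℝ (Fin N),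
      gauge K v ≤ r ↔ v ∈ r • K := by
    intro r hr v
    have h := gauge_le_one_iff_mem_closure hK_conv hKnhds (x := r⁻¹ • v)
    rw [hKcl.closure_eq] at h
    rw [mem_smul_set_iff_inv_smul_mem₀ hr.ne', ← h,
      gauge_smul_of_nonneg (inv_nonneg.2 hr.le), smul_eq_mul, inv_mul_le_one₀ hr]
  have hgauge_lt : ∀ {r : ℝ}, 0 < r → ∀ v : EuclideanSpace ℝ (Fin N),
      gauge K v < r ↔ v ∈ r • interior K := by
    intro r hr v
    rw [mem_smul_set_iff_inv_smul_mem₀ hr.ne',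
      ← gauge_lt_one_iff_mem_interior hK_conv hKnhds (x := r⁻¹ • v),
      gauge_smul_of_nonneg (inv_nonneg.2 hr.le), smul_eq_mul, inv_mul_lt_one₀ hr]
  have hmem_vadd : ∀ (x v : EuclideanSpace ℝ (Fin N)) (A : Set (EuclideanSpace ℝ (Fin N))),
      v ∈ x +ᵥ A ↔ v - x ∈ A := by
    intro x v A
    rw [Set.mem_vadd_set_iff_neg_vadd_mem, vadd_eq_add, neg_add_eq_sub]
  obtain ⟨δ, hδpos, hδ⟩ : ∃ δ > 0, Metric.ball (0 : EuclideanSpace ℝ (Fin N)) δ ⊆ K := by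
    rcases Metric.mem_nhds_iff.1 hKnhds with ⟨δ, hδ, h⟩
    exact ⟨δ, hδ, h⟩
  obtain ⟨M, hM0, hMK⟩ := hK_comp.isBounded.subset_ball_lt 0 0
  -- Basic facts about `C := closure G`.
  set C := closure G with hC
  have hCcl : IsClosed C := isClosed_closure
  have hCbd : Bornology.IsBounded C := hG_bdd.closure
  obtain ⟨D, hD0, hDC⟩ := hCbd.subset_ball_lt 0 0
  have hGvol_fin : volume G ≠ ⊤ :=
    ((measure_mono (subset_closure.trans hDC)).trans_lt measure_ball_lt_top).ne
  -- The measure-theoretic support `S` of `G`.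
  set S := {y : EuclideanSpace ℝ (Fin N) |
    ∀ ε : ℝ, 0 < ε → 0 < volume (G ∩ Metric.ball y ε)} with hSdef
  have hSc_open : IsOpen Sᶜ := by
    rw [Metric.isOpen_iff]
    intro y hy
    rw [mem_compl_iff, hSdef, mem_setOf_eq] at hy
    push_neg at hy
    obtain ⟨ε, hεpos, hvol⟩ := hy
    refine ⟨ε / 2, by positivity, fun y' hy' => ?_⟩
    rw [mem_compl_iff, hSdef, mem_setOf_eq]
    push_neg
    refine ⟨ε / 2, by positivity, ?_⟩
    refine le_trans (measure_mono (inter_subset_inter_right _ ?_)) hvol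
    apply Metric.ball_subset_ball'
    rw [Metric.mem_ball] at hy'
    linarith
  have hS_closed : IsClosed S := isOpen_compl_iff.1 hSc_open
  have hGS : volume (G \ S) = 0 := by
    apply measure_null_of_locally_null
    intro x hx
    have hxS : x ∉ S := hx.2
    rw [hSdef, mem_setOf_eq] at hxS
    push_neg at hxS
    obtain ⟨ε, hεpos, hvol⟩ := hxS
    refine ⟨(G \ S) ∩ Metric.ball x ε,
      inter_mem_nhdsWithin _ (Metric.ball_mem_nhds x hεpos), ?_⟩
    refine le_antisymm (le_trans (measure_mono ?_) hvol) zero_le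
    exact fun y hy => ⟨hy.1.1, hy.2⟩
  have hIntG : interior G ⊆ S := by
    intro x hx ε hε
    obtain ⟨ρ, hρ, hball⟩ := Metric.isOpen_iff.1 isOpen_interior x hx
    have hmin : 0 < min ρ ε := lt_min hρ hε
    refine lt_of_lt_of_le (Metric.measure_ball_pos volume x hmin) (measure_mono ?_)
    intro w hw
    exact ⟨interior_subset (hball (Metric.ball_subset_ball (min_le_left _ _) hw)),
      Metric.ball_subset_ball (min_le_right _ _) hw⟩
  have hSC : S ⊆ C := by
    intro y hyS
    rw [hC, Metric.mem_closure_iff]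
    intro ε hε
    obtain ⟨g, hg⟩ := nonempty_of_measure_ne_zero (hyS ε hε).ne'
    exact ⟨g, hg.1, by have := hg.2; rw [Metric.mem_ball] at this; rwa [dist_comm]⟩
  have hSne : S.Nonempty := by
    rcases eq_empty_or_nonempty S with h | h
    · exfalso
      rw [h, diff_empty] at hGS
      exact hG_pos.ne' hGS
    · exact h
  -- A boundary point of `G` lying in `S`.
  obtain ⟨x₁, hx₁f, hx₁S⟩ : ∃ x₁ ∈ frontier G, x₁ ∈ S := by
    have hSuniv : S ≠ univ := by
      intro h
      obtain ⟨v, hv⟩ := NormedSpace.exists_lt_norm ℝ (EuclideanSpace ℝ (Fin N)) D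
      have : v ∈ C := hSC (h ▸ mem_univ v)
      have := hDC this
      rw [mem_ball_zero_iff] at this
      linarith
    have hfrS : (frontier S).Nonempty := by
      rw [nonempty_iff_ne_empty]
      intro h
      rcases frontier_eq_empty_iff.1 h with h' | h'
      · exact hSne.ne_empty h'
      · exact hSuniv h'
    obtain ⟨x₁, hx₁⟩ := hfrS
    have hx₁S : x₁ ∈ S := hS_closed.frontier_subset hx₁
    refine ⟨x₁, ⟨hSC hx₁S, fun hint => ?_⟩, hx₁S⟩
    have : x₁ ∈ interior S := interior_mono hIntG (by rwa [interior_interior])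
    exact hx₁.2 this
  -- Every boundary point of `G` is in `S`; hence `C = S`.
  have hfrGS : frontier G ⊆ S := by
    intro x hx ε hε
    set r := ε / (2 * M) with hr
    have hrpos : 0 < r := by positivity
    have h1 : volume (G ∩ (x +ᵥ r • K)) = volume (G ∩ (x₁ +ᵥ r • K)) :=
      hdense r hrpos x hx x₁ hx₁f
    have hball_sub : Metric.ball x₁ (r * δ) ⊆ x₁ +ᵥ r • K := by
      intro b hb
      rw [hmem_vadd]
      have : b - x₁ ∈ Metric.ball (0 : EuclideanSpace ℝ (Fin N)) (r * δ) := by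
        rw [mem_ball_zero_iff, ← dist_eq_norm]
        exact hb
      have hbe : Metric.ball (0 : EuclideanSpace ℝ (Fin N)) (r * δ) =
          r • Metric.ball (0 : EuclideanSpace ℝ (Fin N)) δ := by
        rw [smul_ball hrpos.ne', smul_zero, Real.norm_eq_abs, abs_of_pos hrpos]
      rw [hbe] at this
      exact smul_set_mono hδ this
    have hK_sub : x +ᵥ r • K ⊆ Metric.ball x ε := by
      intro v hv
      rw [hmem_vadd] at hv
      have : r • K ⊆ r • Metric.ball (0 : EuclideanSpace ℝ (Fin N)) M := smul_set_mono hMK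
      have hv2 := this hv
      rw [smul_ball hrpos.ne', smul_zero, Real.norm_eq_abs, abs_of_pos hrpos,
        mem_ball_zero_iff] at hv2
      rw [Metric.mem_ball, dist_eq_norm]
      have : r * M = ε / 2 := by rw [hr]; field_simp
      calc ‖v - x‖ < r * M := hv2
        _ = ε / 2 := this
        _ < ε := by linarith
    calc (0 : ℝ≥0∞) < volume (G ∩ Metric.ball x₁ (r * δ)) := hx₁S _ (by positivity)
      _ ≤ volume (G ∩ (x₁ +ᵥ r • K)) :=
          measure_mono (inter_subset_inter_right _ hball_sub)
      _ = volume (G ∩ (x +ᵥ r • K)) := h1.symm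
      _ ≤ volume (G ∩ Metric.ball x ε) :=
          measure_mono (inter_subset_inter_right _ hK_sub)
  have hCS : C = S := by
    apply subset_antisymm _ hSC
    rw [hC, closure_eq_interior_union_frontier]
    exact union_subset hIntG hfrGS
  have hfrC_sub : frontier C ⊆ frontier G := by
    intro y hy
    refine ⟨?_, fun h => hy.2 (interior_mono subset_closure h)⟩
    have : y ∈ closure C := hy.1
    rwa [hCcl.closure_eq] at this
  -- Measurability of translated dilates of K, and the complementary densities.
  have hAcomp : ∀ (x : EuclideanSpace ℝ (Fin N)) (r : ℝ), IsCompact (x +ᵥ r • K) := by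
    intro x r
    rw [← Set.image_vadd, ← Set.image_smul]
    exact (hK_comp.image (continuous_const_smul r)).image (continuous_const_vadd x)
  have hdiff : ∀ r : ℝ, 0 < r → ∀ x ∈ frontier G, ∀ x' ∈ frontier G,
      volume (G \ (x +ᵥ r • K)) = volume (G \ (x' +ᵥ r • K)) := by
    intro r hr x hx x' hx'
    have h1 := measure_inter_add_diff (μ := volume) G ((hAcomp x r).isClosed.measurableSet)
    have h2 := measure_inter_add_diff (μ := volume) G ((hAcomp x' r).isClosed.measurableSet)
    rw [hdense r hr x hx x' hx', ← h2] at h1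
    have hfin : volume (G ∩ (x' +ᵥ r • K)) ≠ ⊤ :=
      ((measure_mono inter_subset_left).trans_lt (lt_top_iff_ne_top.2 hGvol_fin)).ne
    exact ((ENNReal.add_right_inj hfin).1 h1)
  -- The "radius" function on the boundary, and its constancy.
  have hCne : C.Nonempty := hSne.mono hSC
  have hbdd : ∀ x : EuclideanSpace ℝ (Fin N),
      BddAbove ((fun y => gauge K (y - x)) '' C) := by
    intro x
    refine ⟨(D + ‖x‖ + 1) / δ, ?_⟩
    rintro _ ⟨y, hyC, rfl⟩
    apply gauge_le_of_mem (by positivity)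
    have h1 : y - x ∈ Metric.ball (0 : EuclideanSpace ℝ (Fin N)) (D + ‖x‖ + 1) := by
      rw [mem_ball_zero_iff]
      have hy : ‖y‖ < D := by have := hDC hyC; rwa [mem_ball_zero_iff] at this
      calc ‖y - x‖ ≤ ‖y‖ + ‖x‖ := norm_sub_le _ _
        _ < D + ‖x‖ + 1 := by linarith
    have h2 : Metric.ball (0 : EuclideanSpace ℝ (Fin N)) (D + ‖x‖ + 1) =
        ((D + ‖x‖ + 1) / δ) • Metric.ball (0 : EuclideanSpace ℝ (Fin N)) δ := by
      rw [smul_ball (by positivity : ((D + ‖x‖ + 1) / δ) ≠ 0), smul_zero,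
        Real.norm_eq_abs, abs_of_pos (by positivity), div_mul_cancel₀ _ hδpos.ne']
    rw [h2] at h1
    exact smul_set_mono hδ h1
  have hne : ∀ x : EuclideanSpace ℝ (Fin N),
      ((fun y => gauge K (y - x)) '' C).Nonempty := fun x => hCne.image _
  set sFun := fun x : EuclideanSpace ℝ (Fin N) =>
    sSup ((fun y => gauge K (y - x)) '' C) with hsFun
  have hsFun_nonneg : ∀ x ∈ frontier G, 0 ≤ sFun x := by
    intro x hx
    have hxC : x ∈ C := hx.1
    calc (0 : ℝ) = gauge K (x - x) := by rw [sub_self, gauge_zero]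
      _ ≤ sFun x := le_csSup (hbdd x) ⟨x, hxC, rfl⟩
  have hsconst : ∀ x ∈ frontier G, ∀ x' ∈ frontier G, sFun x ≤ sFun x' := by
    intro x hx x' hx'
    by_contra hlt
    push_neg at hlt
    set r := (sFun x' + sFun x) / 2 with hrdef
    have hr1 : sFun x' < r := by rw [hrdef]; linarith
    have hr2 : r < sFun x := by rw [hrdef]; linarith
    have hrpos : 0 < r := lt_of_le_of_lt (hsFun_nonneg x' hx') hr1
    obtain ⟨g, hgmem, hggt⟩ := exists_lt_of_lt_csSup (hne x) hr2
    obtain ⟨y, hyC, rfl⟩ := hgmem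
    have hy_not : y ∉ x +ᵥ r • K := by
      intro hmem
      rw [hmem_vadd] at hmem
      exact absurd ((hgauge_le hrpos _).2 hmem) (not_le.2 hggt)
    obtain ⟨ε, hεpos, hball⟩ :=
      Metric.isOpen_iff.1 (hAcomp x r).isClosed.isOpen_compl y hy_not
    have hySmem : y ∈ S := hCS ▸ hyC
    have hpos2 : 0 < volume (G \ (x +ᵥ r • K)) :=
      lt_of_lt_of_le (hySmem ε hεpos)
        (measure_mono (fun g hg => ⟨hg.1, hball hg.2⟩))
    have hzero : volume (G \ (x' +ᵥ r • K)) = 0 := by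
      have hempty : G \ (x' +ᵥ r • K) = ∅ := by
        rw [eq_empty_iff_forall_notMem]
        intro g hg
        apply hg.2
        rw [hmem_vadd]
        refine (hgauge_le hrpos _).1 ?_
        calc gauge K (g - x') ≤ sFun x' :=
            le_csSup (hbdd x') ⟨g, subset_closure hg.1, rfl⟩
          _ ≤ r := hr1.le
      rw [hempty, measure_empty]
    rw [hdiff r hrpos x hx x' hx', hzero] at hpos2
    exact lt_irrefl _ hpos2
  set R := sFun x₁ with hRdef
  have hsR : ∀ x ∈ frontier G, sFun x = R := fun x hx =>
    le_antisymm (hsconst x hx x₁ hx₁f) (hsconst x₁ hx₁f x hx)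
  have hub : ∀ x ∈ frontier G, ∀ y ∈ C, gauge K (y - x) ≤ R := fun x hx y hy =>
    hsR x hx ▸ le_csSup (hbdd x) ⟨y, hy, rfl⟩
  have hR0 : 0 ≤ R := hsFun_nonneg x₁ hx₁f
  have hRpos : 0 < R := by
    rcases hR0.lt_or_eq with h | h
    · exact h
    · exfalso
      have hCsingle : C ⊆ {x₁} := by
        intro y hy
        have h1 : gauge K (y - x₁) ≤ 0 := by
          have := hub x₁ hx₁f y hy
          rw [← h] at this
          exact this
        have h2 : gauge K (y - x₁) = 0 := le_antisymm h1 (gauge_nonneg _)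
        have h3 : ∀ ρ : ℝ, 0 < ρ → ‖y - x₁‖ < ρ * M := by
          intro ρ hρ
          have : y - x₁ ∈ ρ • K := (hgauge_le hρ _).1 (by rw [h2]; exact hρ.le)
          have := smul_set_mono hMK this
          rwa [smul_ball hρ.ne', smul_zero, Real.norm_eq_abs, abs_of_pos hρ,
            mem_ball_zero_iff] at this
        have h4 : y = x₁ := by
          by_contra hne'
          have hpos : 0 < ‖y - x₁‖ := norm_sub_pos_iff.2 hne'
          have h5 := h3 (‖y - x₁‖ / (2 * M)) (by positivity)
          have heq : ‖y - x₁‖ / (2 * M) * M = ‖y - x₁‖ / 2 := by field_simp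
          rw [heq] at h5
          linarith
        exact mem_singleton_iff.2 h4
      have : volume G ≤ volume ({x₁} : Set (EuclideanSpace ℝ (Fin N))) :=
        le_trans (measure_mono subset_closure) (measure_mono hCsingle)
      rw [measure_singleton] at this
      exact hG_pos.ne' (le_antisymm this zero_le)
  -- The central symmetry.
  set T := fun y : EuclideanSpace ℝ (Fin N) => (2 : ℝ) • z - y with hT
  have hTinv : ∀ y, T (T y) = y := fun y => sub_sub_cancel _ _
  have hTC : T '' C = C := hz
  let Th : Homeomorph (EuclideanSpace ℝ (Fin N)) (EuclideanSpace ℝ (Fin N)) :=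
    { toFun := T
      invFun := T
      left_inv := hTinv
      right_inv := hTinv
      continuous_toFun := continuous_const.sub continuous_id
      continuous_invFun := continuous_const.sub continuous_id }
  have hTint : ∀ y, y ∈ interior C → T y ∈ interior C := by
    intro y hy
    have h1 : T y ∈ T '' interior C := mem_image_of_mem T hy
    have h2 : T '' interior C = interior (T '' C) := Th.image_interior C
    rw [h2, hTC] at h1
    exact h1
  have hTfr : ∀ y ∈ frontier C, T y ∈ frontier C := by
    intro y hy
    have hyC : y ∈ C := hCcl.frontier_subset hy
    have hyni : y ∉ interior C := hy.2
    refine ⟨?_, fun h => hyni ?_⟩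
    · rw [hCcl.closure_eq]
      exact hTC ▸ mem_image_of_mem T hyC
    · have := hTint _ h
      rwa [hTinv] at this
  -- Every boundary point of `C` is at gauge-distance exactly `R/2` from `z`.
  have hfr_half : ∀ x ∈ frontier C, gauge K (x - z) ≤ R / 2 := by
    intro x hx
    have h1 : gauge K (x - T x) ≤ R :=
      hub (T x) (hfrC_sub (hTfr x hx)) x (hCcl.frontier_subset hx)
    have h2 : x - T x = (2 : ℝ) • (x - z) := by rw [hT]; module
    rw [h2, gauge_smul_of_nonneg (by norm_num : (0:ℝ) ≤ 2), smul_eq_mul] at h1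
    linarith
  have hC_half : ∀ y ∈ C, gauge K (y - z) ≤ R / 2 := by
    intro y hy
    rcases eq_or_ne y z with rfl | hyz
    · rw [sub_self, gauge_zero]; linarith
    · have hnz : 0 < ‖y - z‖ := by rwa [norm_sub_pos_iff]
      set A := Ici (1 : ℝ) ∩ (fun t : ℝ => z + t • (y - z)) ⁻¹' C with hA
      have hA1 : (1 : ℝ) ∈ A := by
        refine Set.mem_inter (mem_Ici.2 le_rfl) ?_
        show z + (1 : ℝ) • (y - z) ∈ C
        rw [one_smul, add_sub_cancel]
        exact hy
      have hAbd : BddAbove A := by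
        refine ⟨(D + ‖z‖) / ‖y - z‖, fun t ht => ?_⟩
        have h1 : z + t • (y - z) ∈ C := ht.2
        have h2 : ‖z + t • (y - z)‖ < D := by
          have := hDC h1; rwa [mem_ball_zero_iff] at this
        have h3 : ‖t • (y - z)‖ ≤ D + ‖z‖ := by
          calc ‖t • (y - z)‖ = ‖z + t • (y - z) - z‖ := by rw [add_sub_cancel_left]
            _ ≤ ‖z + t • (y - z)‖ + ‖z‖ := norm_sub_le _ _
            _ ≤ D + ‖z‖ := by linarith
        have h4 : t * ‖y - z‖ ≤ D + ‖z‖ := by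
          have ht0 : 0 ≤ t := le_trans zero_le_one ht.1
          calc t * ‖y - z‖ = ‖t • (y - z)‖ := by
                rw [norm_smul, Real.norm_eq_abs, abs_of_nonneg ht0]
            _ ≤ D + ‖z‖ := h3
        rwa [le_div_iff₀ hnz]
      have hcont : Continuous fun t : ℝ => z + t • (y - z) := by fun_prop
      have hAcl : IsClosed A := isClosed_Ici.inter (hCcl.preimage hcont)
      have htA : sSup A ∈ A := hAcl.csSup_mem ⟨1, hA1⟩ hAbd
      have hts1 : 1 ≤ sSup A := le_csSup hAbd hA1
      have hqC : z + sSup A • (y - z) ∈ C := htA.2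
      have hqfr : z + sSup A • (y - z) ∈ frontier C := by
        refine ⟨by rw [hCcl.closure_eq]; exact hqC, fun hint => ?_⟩
        obtain ⟨ε, hε, hball⟩ := Metric.isOpen_iff.1 isOpen_interior _ hint
        set t' := sSup A + ε / (2 * ‖y - z‖) with ht'
        have ht'A : t' ∈ A := by
          refine Set.mem_inter ?_ ?_
          · have hq : 0 < ε / (2 * ‖y - z‖) := by positivity
            rw [mem_Ici, ht']
            linarith [hts1]
          · show z + t' • (y - z) ∈ C
            apply interior_subset
            apply hball
            rw [Metric.mem_ball, dist_eq_norm]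
            have heq : z + t' • (y - z) - (z + sSup A • (y - z)) =
                (t' - sSup A) • (y - z) := by module
            rw [heq, norm_smul, Real.norm_eq_abs, ht']
            have h5 : sSup A + ε / (2 * ‖y - z‖) - sSup A = ε / (2 * ‖y - z‖) := by ring
            rw [h5, abs_of_pos (by positivity)]
            have h6 : ε / (2 * ‖y - z‖) * ‖y - z‖ = ε / 2 := by field_simp
            rw [h6]; linarith
        have := le_csSup hAbd ht'A
        rw [ht'] at this
        have : 0 < ε / (2 * ‖y - z‖) := by positivity
        linarith [le_csSup hAbd ht'A]
      have h3 := hfr_half _ hqfr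
      rw [add_sub_cancel_left, gauge_smul_of_nonneg (by linarith : (0:ℝ) ≤ sSup A),
        smul_eq_mul] at h3
      nlinarith [gauge_nonneg (s := K) (y - z)]
  have hfr_half' : ∀ x ∈ frontier C, R / 2 ≤ gauge K (x - z) := by
    intro x hx
    have hxG : x ∈ frontier G := hfrC_sub hx
    have hKsymm' : ∀ v ∈ K, -v ∈ K := by
      intro v hv
      rw [hK_symm]
      exact Set.neg_mem_neg.2 hv
    have key : ∀ ε : ℝ, 0 < ε → R - ε ≤ R / 2 + gauge K (x - z) := by
      intro ε hε
      have hlt : R - ε < sFun x := by rw [hsR x hxG]; linarith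
      obtain ⟨g, hgmem, hgt⟩ := exists_lt_of_lt_csSup (hne x) hlt
      obtain ⟨y, hyC, rfl⟩ := hgmem
      have htri : gauge K (y - x) ≤ gauge K (y - z) + gauge K (z - x) := by
        have := gauge_add_le hK_conv habs (y - z) (z - x)
        rwa [sub_add_sub_cancel] at this
      have hsymm : gauge K (z - x) = gauge K (x - z) := by
        rw [← neg_sub x z, gauge_neg hKsymm']
      have h5 := hC_half y hyC
      rw [hsymm] at htri
      linarith
    by_contra h
    push_neg at h
    have := key ((R / 2 - gauge K (x - z)) / 2) (by linarith)
    linarith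
  -- The candidate bodies.
  have hR2 : 0 < R / 2 := by linarith
  set W := z +ᵥ (R / 2) • K with hW
  set B := z +ᵥ (R / 2) • interior K with hB
  have hWmem : ∀ y, y ∈ W ↔ gauge K (y - z) ≤ R / 2 := by
    intro y
    rw [hW, hmem_vadd]
    exact (hgauge_le hR2 _).symm
  have hBmem : ∀ y, y ∈ B ↔ gauge K (y - z) < R / 2 := by
    intro y
    rw [hB, hmem_vadd]
    exact (hgauge_lt hR2 _).symm
  have hpush : ∀ Dset : Set (EuclideanSpace ℝ (Fin N)),
      (∀ y ∈ Dset, gauge K (y - z) ≤ R / 2) →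
      ∀ u ∈ interior Dset, gauge K (u - z) < R / 2 := by
    intro Dset hDle u hu
    rcases lt_or_eq_of_le (hDle u (interior_subset hu)) with h | h
    · exact h
    · exfalso
      have huz : u ≠ z := by
        intro h'
        rw [h', sub_self, gauge_zero] at h
        linarith
      have hnz : 0 < ‖u - z‖ := by rwa [norm_sub_pos_iff]
      obtain ⟨ε, hε, hball⟩ := Metric.isOpen_iff.1 isOpen_interior u hu
      set t := ε / (2 * ‖u - z‖) with ht
      have htpos : 0 < t := by positivity
      have hmem : u + t • (u - z) ∈ Dset := by
        apply interior_subset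
        apply hball
        rw [Metric.mem_ball, dist_eq_norm, add_sub_cancel_left, norm_smul,
          Real.norm_eq_abs, abs_of_pos htpos, ht]
        have h6 : ε / (2 * ‖u - z‖) * ‖u - z‖ = ε / 2 := by field_simp
        rw [h6]; linarith
      have h6 := hDle _ hmem
      have h7 : u + t • (u - z) - z = (1 + t) • (u - z) := by module
      rw [h7, gauge_smul_of_nonneg (by linarith : (0:ℝ) ≤ 1 + t), smul_eq_mul, h] at h6
      nlinarith
  -- `frontier C` is contained in the frontier of the convex body `W`, hence null.
  have hWcomp : IsCompact W := by
    rw [hW, ← Set.image_vadd, ← Set.image_smul]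
    exact (hK_comp.image (continuous_const_smul _)).image (continuous_const_vadd z)
  have hfrW : frontier C ⊆ frontier W := by
    intro x hx
    have heq : gauge K (x - z) = R / 2 := le_antisymm (hfr_half x hx) (hfr_half' x hx)
    refine ⟨subset_closure ((hWmem x).2 heq.le), fun hint => ?_⟩
    have := hpush W (fun y hy => (hWmem y).1 hy) x hint
    rw [heq] at this
    exact lt_irrefl _ this
  have hfrC0 : volume (frontier C) = 0 := by
    have hWconv : Convex ℝ W := (hK_conv.smul _).vadd z
    exact measure_mono_null hfrW (hWconv.addHaar_frontier volume)
  -- `interior C` is nonempty.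
  have hiCne : (interior C).Nonempty := by
    by_contra h
    rw [not_nonempty_iff_eq_empty] at h
    have hsub : C ⊆ interior C ∪ frontier C := by
      nth_rewrite 1 [← hCcl.closure_eq]
      rw [closure_eq_interior_union_frontier]
    have hvol : volume C ≤ volume (interior C) + volume (frontier C) :=
      le_trans (measure_mono hsub) (measure_union_le _ _)
    rw [h, measure_empty, hfrC0, add_zero] at hvol
    exact hG_pos.ne' (le_antisymm (le_trans (measure_mono subset_closure) hvol) zero_le)
  -- `B ⊆ C` by connectedness.
  have hBopen : IsOpen B := by
    have hBeq : B = {y | gauge K (y - z) < R / 2} := Set.ext hBmem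
    rw [hBeq]
    exact isOpen_lt ((continuous_gauge hK_conv hKnhds).comp
      (continuous_id.sub continuous_const)) continuous_const
  have hBconv : Convex ℝ B := (hK_conv.interior.smul _).vadd z
  obtain ⟨u, huB, huI⟩ : ∃ u, u ∈ B ∩ interior C := by
    obtain ⟨u, hu⟩ := hiCne
    exact ⟨u, (hBmem u).2 (hpush C hC_half u hu), hu⟩
  have hBsub : B ⊆ closure (interior C) := by
    by_contra hsub
    rw [not_subset] at hsub
    obtain ⟨w, hwB, hwn⟩ := hsub
    have hcover : B ⊆ interior C ∪ (closure (interior C))ᶜ := by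
      intro y hy
      by_cases hyc : y ∈ closure (interior C)
      · left
        by_contra hy2
        have hyfr : y ∈ frontier (interior C) := by
          refine ⟨hyc, ?_⟩
          rwa [interior_interior]
        have := hfr_half' y (frontier_interior_subset hyfr)
        rw [hBmem] at hy
        linarith
      · right; exact hyc
    obtain ⟨v, hv⟩ := hBconv.isPreconnected (interior C) (closure (interior C))ᶜ
      isOpen_interior (isOpen_compl_iff.2 isClosed_closure) hcover
      ⟨u, huB, huI⟩ ⟨w, hwB, hwn⟩
    exact hv.2.2 (subset_closure hv.2.1)
  have hBC : B ⊆ C := hBsub.trans (closure_minimal interior_subset hCcl)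
  -- `W ⊆ C` by approximation from inside.
  have hWC : W ⊆ C := by
    intro y hyW
    have hyg : gauge K (y - z) ≤ R / 2 := (hWmem y).1 hyW
    have hseq : ∀ n : ℕ, z + (1 - 1 / (n + 1 : ℝ)) • (y - z) ∈ C := by
      intro n
      apply hBC
      rw [hBmem, add_sub_cancel_left]
      have hnn : (0:ℝ) ≤ 1 - 1 / (n + 1 : ℝ) := by
        have h1 : (1 : ℝ) / (n + 1 : ℝ) ≤ 1 := by
          rw [div_le_one (by positivity)]
          have : (0:ℝ) ≤ (n : ℝ) := Nat.cast_nonneg n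
          linarith
        linarith
      have hlt1 : 1 / (n + 1 : ℝ) > 0 := by positivity
      rw [gauge_smul_of_nonneg hnn, smul_eq_mul]
      calc (1 - 1 / (n + 1 : ℝ)) * gauge K (y - z)
          ≤ (1 - 1 / (n + 1 : ℝ)) * (R / 2) := mul_le_mul_of_nonneg_left hyg hnn
        _ < R / 2 := by nlinarith
    have htend : Filter.Tendsto (fun n : ℕ => z + (1 - 1 / (n + 1 : ℝ)) • (y - z))
        Filter.atTop (nhds y) := by
      have h9 : Filter.Tendsto (fun n : ℕ => 1 / (n + 1 : ℝ)) Filter.atTop (nhds 0) :=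
        tendsto_one_div_add_atTop_nhds_zero_nat
      have h10 : Filter.Tendsto (fun n : ℕ => 1 - 1 / (n + 1 : ℝ)) Filter.atTop (nhds 1) := by
        have := Filter.Tendsto.const_sub (1:ℝ) h9
        simpa using this
      have h11 : Filter.Tendsto (fun n : ℕ => z + (1 - 1 / (n + 1 : ℝ)) • (y - z))
          Filter.atTop (nhds (z + (1:ℝ) • (y - z))) :=
        Filter.Tendsto.const_add z (h10.smul tendsto_const_nhds)
      rw [one_smul, add_sub_cancel] at h11
      exact h11
    exact hCcl.mem_of_tendsto htend (Filter.Eventually.of_forall hseq)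
  have hCW : C ⊆ W := fun y hy => (hWmem y).2 (hC_half y hy)
  exact ⟨R / 2, hR2, z, subset_antisymm hCW hWC⟩
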